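/- The space ℚ of rational numbers, with the subspace topology inherited from ℝ, is T-locally compact (although it is not locally compact). -/
import Mathlib

def TLocallyCompact (X : Type*) [TopologicalSpace X] : Prop :=
  ∀ (x : X) (U : Set X), IsOpen U → x ∈ U →
    ∃ V : Set X, IsOpen V ∧ x ∈ V ∧ V ⊆ U ∧ IsCompact (frontier V)

theorem rat_tLocallyCompact : TLocallyCompact ℚ ∧ ¬ LocallyCompactSpace ℚ := by
  constructor
  · intro x U hU hxU
    obtain ⟨ε, hε, hball⟩ := Metric.isOpen_iff.1 hU x hxU
    obtain ⟨a, ha, ha1, ha2⟩ := exists_irrational_btwn (show (x:ℝ) - ε < x by linarith)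
    obtain ⟨b, hb, hb1, hb2⟩ := exists_irrational_btwn (show (x:ℝ) < x + ε by linarith)
    refine ⟨(Rat.cast : ℚ → ℝ) ⁻¹' Set.Ioo a b, ?_, ⟨ha2, hb1⟩, ?_, ?_⟩
    · exact isOpen_Ioo.preimage Rat.continuous_coe_real
    · intro q hq
      apply hball
      rw [Metric.mem_ball, Rat.dist_eq, abs_sub_lt_iff]
      constructor
      · have := hq.2; linarith
      · have := hq.1; linarith
    · have hclopen : IsClopen ((Rat.cast : ℚ → ℝ) ⁻¹' Set.Ioo a b) := by
        constructor
        · have : (Rat.cast : ℚ → ℝ) ⁻¹' Set.Ioo a b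
              = (Rat.cast : ℚ → ℝ) ⁻¹' Set.Icc a b := by
            ext q
            simp only [Set.mem_preimage, Set.mem_Ioo, Set.mem_Icc]
            constructor
            · exact fun h => ⟨h.1.le, h.2.le⟩
            · rintro ⟨h1, h2⟩
              refine ⟨h1.lt_of_ne fun h => ha ⟨q, h.symm⟩, h2.lt_of_ne fun h => hb ⟨q, h⟩⟩
          rw [this]
          exact isClosed_Icc.preimage Rat.continuous_coe_real
        · exact isOpen_Ioo.preimage Rat.continuous_coe_real
      rw [hclopen.frontier_eq]
      exact isCompact_empty
  · intro h
    obtain ⟨K, hKn, -, hKc⟩ := h.local_compact_nhds (0 : ℚ) Set.univ Filter.univ_mem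
    obtain ⟨ε, hε, hball⟩ := Metric.mem_nhds_iff.1 hKn
    obtain ⟨ξ, hξ, hξ1, hξ2⟩ := exists_irrational_btwn (show (0:ℝ) < ε from hε)
    have hC : IsClosed ((Rat.cast : ℚ → ℝ) '' K) :=
      (hKc.image Rat.continuous_coe_real).isClosed
    have hmem : ξ ∈ (Rat.cast : ℚ → ℝ) '' K := by
      rw [← hC.closure_eq]
      rw [mem_closure_iff]
      intro o ho hξo
      obtain ⟨δ, hδ, hδball⟩ := Metric.isOpen_iff.1 ho ξ hξo
      obtain ⟨q, hq1, hq2⟩ := exists_rat_btwn (show max (ξ - δ) 0 < ξ by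
        simp [hξ1, hδ])
      have hq0 : (0:ℝ) < q := lt_of_le_of_lt (le_max_right _ _) hq1
      have hqδ : ξ - δ < q := lt_of_le_of_lt (le_max_left _ _) hq1
      refine ⟨(q:ℝ), hδball ?_, q, hball ?_, rfl⟩
      · rw [Metric.mem_ball, Real.dist_eq, abs_sub_lt_iff]; constructor <;> linarith
      · rw [Metric.mem_ball, Rat.dist_eq, abs_sub_lt_iff]
        push_cast
        constructor <;> linarith
    obtain ⟨q, -, hq⟩ := hmem
    exact hξ ⟨q, hq⟩
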